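/- Leibniz formula for the diamond fractional sum: let f, g be real functions on the grid {a, a+1, a+2, …}, let 0 < α < 1, 0 < β < 1, γ ∈ [0,1], and n ∈ ℕ with t = a + n. Then (_γ◇_a^{−α,−β}(f·g))(t) = γ Σ_{k=0}^{n} binom(−α,k)·(∇^k g)(t)·[(1/Γ(α+k)) Σ_{j=0}^{n−k} (t+α−(a+j)−1)^(α+k−1) f(a+j)] + (1−γ) Σ_{k=0}^{n} binom(−β,k)·(∇^k g)(t)·[(1/Γ(β+k)) Σ_{j=0}^{n−k} (t+β−(a+j)−1)^(β+k−1) f(a+j)], where f·g is the pointwise product. -/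

import Mathlib

open Finset

/-- Falling factorial function `t^(ν) = Γ(t+1)/Γ(t+1-ν)` (with the convention
`1/Γ(z) = 0` for `z` a nonpositive integer, automatic since `Real.Gamma`
vanishes there and division by zero is zero). -/
noncomputable def fall (t ν : ℝ) : ℝ := Real.Gamma (t + 1) / Real.Gamma (t + 1 - ν)

/-- Rising factorial function `t^↑ν = Γ(t+ν)/Γ(t)`. -/
noncomputable def rise (t ν : ℝ) : ℝ := Real.Gamma (t + ν) / Real.Gamma t

/-- Delta fractional sum `(Δ_a^{-ν} f)(t+ν)` at `t = a + n`. -/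
noncomputable def deltaSum (a ν : ℝ) (f : ℝ → ℝ) (n : ℕ) : ℝ :=
  (1 / Real.Gamma ν) * ∑ j ∈ Finset.range (n + 1),
    fall ((a + n) + ν - (a + j) - 1) (ν - 1) * f (a + j)

/-- Nabla fractional sum `(∇_a^{-ν} f)(t)` at `t = a + n`. -/
noncomputable def nablaSum (a ν : ℝ) (f : ℝ → ℝ) (n : ℕ) : ℝ :=
  (1 / Real.Gamma ν) * ∑ j ∈ Finset.range (n + 1),
    rise ((a + n) - (a + j) + 1) (ν - 1) * f (a + j)

/-- Diamond-γ fractional sum of order (α, β) at `t = a + n`. -/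
noncomputable def diamond (γ a α β : ℝ) (f : ℝ → ℝ) (n : ℕ) : ℝ :=
  γ * deltaSum a α f n + (1 - γ) * nablaSum a β f n

/-- Backward difference `(∇ g)(t) = g(t) - g(t-1)`; `bdiff^[k]` is `∇^k`. -/
noncomputable def bdiff (g : ℝ → ℝ) : ℝ → ℝ := fun t => g t - g (t - 1)

/-- Generalized binomial coefficient `binom(u,v) = Γ(u+1)/(Γ(v+1)Γ(u-v+1))`. -/
noncomputable def binomR (u v : ℝ) : ℝ :=
  Real.Gamma (u + 1) / (Real.Gamma (v + 1) * Real.Gamma (u - v + 1))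


lemma bdiff_iter (g : ℝ → ℝ) (k : ℕ) (t : ℝ) :
    (bdiff^[k] g) t = ∑ i ∈ range (k + 1), (-1 : ℝ) ^ i * (k.choose i) * g (t - i) := by
  induction k generalizing t with
  | zero => simp
  | succ k ih =>
    have step : (bdiff^[k+1] g) t = (bdiff^[k] g) t - (bdiff^[k] g) (t - 1) := by
      rw [Function.iterate_succ_apply']; rfl
    have hcast : ∀ i : ℕ, t - ((i:ℕ)+1:ℕ) = t - 1 - i := by
      intro i; push_cast; ring
    have e1 : ∑ i ∈ range (k + 2), (-1 : ℝ) ^ i * ((k+1).choose i) * g (t - i)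
        = (∑ i ∈ range (k + 1),
            (-((-1:ℝ)^i * (k.choose i) * g (t - 1 - i))
              - (-1:ℝ)^i * (k.choose (i+1)) * g (t - 1 - i))) + g t := by
      rw [Finset.sum_range_succ']
      congr 1
      · refine Finset.sum_congr rfl fun i hi => ?_
        rw [hcast i, Nat.choose_succ_succ]
        push_cast
        ring
      · simp
    have eA : ∑ i ∈ range (k+2), (-1:ℝ)^i * (k.choose i) * g (t - i)
        = ∑ i ∈ range (k+1), (-1:ℝ)^i * (k.choose i) * g (t - i) := by
      rw [Finset.sum_range_succ]
      simp [Nat.choose_eq_zero_of_lt]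
    have eB : ∑ i ∈ range (k+2), (-1:ℝ)^i * (k.choose i) * g (t - i)
        = ∑ i ∈ range (k+1), (-1:ℝ)^(i+1) * (k.choose (i+1)) * g (t - ((i:ℕ)+1:ℕ)) + g t := by
      rw [Finset.sum_range_succ']
      simp
    have eC : ∑ i ∈ range (k+1), (-1:ℝ)^i * (k.choose (i+1)) * g (t - 1 - i)
        = -∑ i ∈ range (k+1), (-1:ℝ)^(i+1) * (k.choose (i+1)) * g (t - ((i:ℕ)+1:ℕ)) := by
      rw [← Finset.sum_neg_distrib]
      refine Finset.sum_congr rfl fun i hi => ?_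
      rw [hcast i]
      ring
    have esplit : ∑ i ∈ range (k + 1),
            (-((-1:ℝ)^i * (k.choose i) * g (t - 1 - i))
              - (-1:ℝ)^i * (k.choose (i+1)) * g (t - 1 - i))
        = -∑ i ∈ range (k+1), (-1:ℝ)^i * (k.choose i) * g (t - 1 - i)
          - ∑ i ∈ range (k+1), (-1:ℝ)^i * (k.choose (i+1)) * g (t - 1 - i) := by
      rw [Finset.sum_sub_distrib, Finset.sum_neg_distrib]
    rw [step, ih, ih, e1, esplit]
    have hih1 := ih t
    linarith [eA, eB, eC]

lemma Gamma_add_nat (x : ℝ) (k : ℕ) (h : ∀ i : ℕ, i < k → x + i ≠ 0) :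
    Real.Gamma (x + k) = (∏ i ∈ range k, (x + i)) * Real.Gamma x := by
  induction k with
  | zero => simp
  | succ k ih =>
    have : (x + (k+1:ℕ) : ℝ) = (x + k) + 1 := by push_cast; ring
    rw [this, Real.Gamma_add_one (h k (Nat.lt_succ_self k)), Finset.prod_range_succ,
      ih (fun i hi => h i (hi.trans (Nat.lt_succ_self k)))]
    ring

lemma prod_reflect (ν : ℝ) (k : ℕ) :
    ∏ i ∈ range k, ((1 - ν - k : ℝ) + i) = (-1)^k * ∏ i ∈ range k, (ν + i) := by
  have := Finset.prod_range_reflect (fun i : ℕ => -(ν + i)) k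
  calc ∏ i ∈ range k, ((1 - ν - k : ℝ) + i)
      = ∏ i ∈ range k, -(ν + (k - 1 - i : ℕ)) := by
        refine Finset.prod_congr rfl fun i hi => ?_
        have hik : i < k := Finset.mem_range.mp hi
        have hk1 : (1:ℕ) ≤ k := by omega
        have hile : i ≤ k - 1 := Nat.le_sub_one_of_lt hik
        have : ((k - 1 - i : ℕ) : ℝ) = (k:ℝ) - 1 - i := by
          rw [Nat.cast_sub hile, Nat.cast_sub hk1]
          push_cast; ring
        rw [this]; ring
    _ = ∏ i ∈ range k, -(ν + i) := this
    _ = (-1)^k * ∏ i ∈ range k, (ν + i) := by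
        have : ∀ i ∈ range k, -(ν + (i:ℝ)) = (-1) * (ν + i) := fun i _ => by ring
        rw [Finset.prod_congr rfl this, Finset.prod_mul_distrib, Finset.prod_const,
          Finset.card_range]

lemma binomR_div (ν : ℝ) (hν0 : 0 < ν) (hν1 : ν < 1) (k : ℕ) :
    binomR (-ν) k * (1 / Real.Gamma (ν + k)) = (-1)^k / ((Nat.factorial k : ℝ) * Real.Gamma ν) := by
  have h1 : Real.Gamma ((k:ℝ) + 1) = Nat.factorial k := Real.Gamma_nat_eq_factorial k
  have hz1 : ∀ i : ℕ, i < k → (1 - ν - k : ℝ) + i ≠ 0 := by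
    intro i hi
    intro h
    have : ν = 1 - (k:ℝ) + i := by linarith
    have hik : (i:ℝ) + 1 ≤ k := by exact_mod_cast hi
    linarith
  have h2 : Real.Gamma ((1 - ν - k) + k) = (∏ i ∈ range k, ((1 - ν - k:ℝ) + i)) * Real.Gamma (1 - ν - k) :=
    Gamma_add_nat _ k hz1
  have h3 : Real.Gamma (ν + k) = (∏ i ∈ range k, (ν + i)) * Real.Gamma ν := by
    refine Gamma_add_nat ν k fun i hi => ?_
    positivity
  have hG : Real.Gamma (1 - ν - k) ≠ 0 := by
    refine Real.Gamma_ne_zero fun m => ?_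
    intro h
    have : ν = 1 - (k:ℝ) + m := by linarith
    have hk : (0:ℝ) ≤ k := by positivity
    have hm : (0:ℝ) ≤ m := by positivity
    -- ν = 1 + m - k must be an integer, contradiction with 0 < ν < 1
    have : (ν : ℝ) = ((1 + m : ℤ) : ℝ) - ((k:ℤ):ℝ) := by push_cast; linarith
    have hint : ∃ z : ℤ, (ν:ℝ) = z := ⟨1 + m - k, by push_cast [this]; ring⟩
    obtain ⟨z, hzv⟩ := hint
    have h0 : (0:ℝ) < z := by rw [← hzv]; exact hν0
    have h1' : (z:ℝ) < 1 := by rw [← hzv]; exact hν1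
    have : 0 < z := by exact_mod_cast h0
    have : z < 1 := by exact_mod_cast h1'
    omega
  have heq : (-ν + 1 : ℝ) = (1 - ν - k) + k := by ring
  have heq2 : (-ν - k + 1 : ℝ) = 1 - ν - k := by ring
  rw [binomR, heq, heq2, h2, h3, prod_reflect, h1]
  have hprod : (∏ i ∈ range k, (ν + (i:ℝ))) ≠ 0 := by
    refine Finset.prod_ne_zero_iff.mpr fun i hi => ?_
    positivity
  have hGν : Real.Gamma ν ≠ 0 := Real.Gamma_ne_zero fun m h => by
    have hm : (0:ℝ) ≤ m := Nat.cast_nonneg m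
    linarith
  have hk : (Nat.factorial k : ℝ) ≠ 0 := by exact_mod_cast (Nat.factorial_ne_zero k)
  field_simp

lemma alt_inv_fact (M : ℕ) :
    ∑ m ∈ range (M + 1), (-1:ℝ)^m / (Nat.factorial m * Nat.factorial (M - m))
      = (if M = 0 then 1 else 0) / Nat.factorial M := by
  have h1 : ∀ m ∈ range (M+1), (-1:ℝ)^m / (Nat.factorial m * Nat.factorial (M - m))
      = ((-1:ℝ)^m * (M.choose m)) / Nat.factorial M := by
    intro m hm
    have hmM : m ≤ M := Nat.lt_succ_iff.mp (Finset.mem_range.mp hm)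
    have := Nat.choose_mul_factorial_mul_factorial hmM
    have hcast : ((M.choose m : ℝ)) * (Nat.factorial m) * (Nat.factorial (M-m)) = Nat.factorial M := by
      exact_mod_cast congrArg (Nat.cast : ℕ → ℝ) this
    have hfm : ((Nat.factorial m : ℝ)) ≠ 0 := by exact_mod_cast Nat.factorial_ne_zero m
    have hfMm : ((Nat.factorial (M-m) : ℝ)) ≠ 0 := by exact_mod_cast Nat.factorial_ne_zero (M-m)
    have hfM : ((Nat.factorial M : ℝ)) ≠ 0 := by exact_mod_cast Nat.factorial_ne_zero M
    field_simp
    linear_combination (-1:ℝ) * hcast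
  rw [Finset.sum_congr rfl h1, ← Finset.sum_div]
  congr 1
  have := Int.alternating_sum_range_choose (n := M)
  have hcast : ∑ m ∈ range (M+1), ((-1:ℝ))^m * (M.choose m) = ((if M = 0 then 1 else 0 : ℤ) : ℝ) := by
    rw [← this]
    push_cast
    rfl
  rw [hcast]
  split <;> norm_num

lemma comb (N i : ℕ) :
    ∑ k ∈ range (N + 1), (-1:ℝ)^k * (k.choose i) / (Nat.factorial k * Nat.factorial (N - k))
      = if i = N then (-1:ℝ)^N / Nat.factorial N else 0 := by
  by_cases hiN : i ≤ N
  · -- split range (N+1) at i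
    have hsplit : range (N+1) = Finset.Ico 0 (N+1) := by rw [Finset.range_eq_Ico]
    rw [hsplit, ← Finset.sum_Ico_consecutive _ (Nat.zero_le i) (by omega : i ≤ N+1)]
    have hz : ∑ k ∈ Finset.Ico 0 i, (-1:ℝ)^k * (k.choose i) / (Nat.factorial k * Nat.factorial (N - k)) = 0 := by
      refine Finset.sum_eq_zero fun k hk => ?_
      have : k < i := (Finset.mem_Ico.mp hk).2
      simp [Nat.choose_eq_zero_of_lt this]
    rw [hz, zero_add, Finset.sum_Ico_eq_sum_range]
    have hNi : N + 1 - i = (N - i) + 1 := by omega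
    rw [hNi]
    have h2 : ∀ m ∈ range ((N-i)+1),
        (-1:ℝ)^(i+m) * ((i+m).choose i) / (Nat.factorial (i+m) * Nat.factorial (N - (i+m)))
          = ((-1:ℝ)^i / Nat.factorial i) * ((-1:ℝ)^m / (Nat.factorial m * Nat.factorial ((N-i) - m))) := by
      intro m hm
      have hmNi : m ≤ N - i := Nat.lt_succ_iff.mp (Finset.mem_range.mp hm)
      have hNim : N - (i+m) = (N - i) - m := by omega
      have hfact := Nat.add_choose_mul_factorial_mul_factorial i m
      have hsymm : (i+m).choose i = (i+m).choose m := by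
        have := Nat.choose_symm (Nat.le_add_left m i)
        simpa using this
      have hcast : (((i+m).choose i : ℝ)) * (Nat.factorial i) * (Nat.factorial m) = Nat.factorial (i+m) := by
        rw [hsymm]
        exact_mod_cast congrArg (Nat.cast : ℕ → ℝ) hfact
      have hfi : ((Nat.factorial i : ℝ)) ≠ 0 := by exact_mod_cast Nat.factorial_ne_zero i
      have hfm : ((Nat.factorial m : ℝ)) ≠ 0 := by exact_mod_cast Nat.factorial_ne_zero m
      have hfim : ((Nat.factorial (i+m) : ℝ)) ≠ 0 := by exact_mod_cast Nat.factorial_ne_zero (i+m)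
      have hfr : ((Nat.factorial ((N-i)-m) : ℝ)) ≠ 0 := by exact_mod_cast Nat.factorial_ne_zero ((N-i)-m)
      rw [hNim, pow_add]
      field_simp
      linear_combination hcast
    rw [Finset.sum_congr rfl h2, ← Finset.mul_sum, alt_inv_fact (N - i)]
    by_cases hiN' : i = N
    · subst hiN'
      simp
    · have : N - i ≠ 0 := by omega
      simp [this, hiN']
  · have : ∀ k ∈ range (N+1), (-1:ℝ)^k * (k.choose i) / (Nat.factorial k * Nat.factorial (N - k)) = 0 := by
      intro k hk
      have hkN : k ≤ N := Nat.lt_succ_iff.mp (Finset.mem_range.mp hk)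
      have : k < i := by omega
      simp [Nat.choose_eq_zero_of_lt this]
    rw [Finset.sum_eq_zero this]
    have : i ≠ N := by omega
    simp [this]

lemma Asum (n j i : ℕ) (hj : j ≤ n) :
    ∑ k ∈ range (n+1), (-1:ℝ)^k * (k.choose i) / (Nat.factorial k * Real.Gamma ((n:ℝ)-j-k+1))
      = if i = n - j then (-1:ℝ)^i / Nat.factorial (n-j) else 0 := by
  set N := n - j with hN
  have hcN : ((N:ℕ) : ℝ) = (n:ℝ) - j := by rw [hN, Nat.cast_sub hj]
  have hshrink : ∑ k ∈ range (n+1), (-1:ℝ)^k * (k.choose i) / (Nat.factorial k * Real.Gamma ((n:ℝ)-j-k+1))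
      = ∑ k ∈ range (N+1), (-1:ℝ)^k * (k.choose i) / (Nat.factorial k * Real.Gamma ((n:ℝ)-j-k+1)) := by
    rw [eq_comm]
    refine Finset.sum_subset (Finset.range_subset_range.mpr (by omega)) fun k hk hk' => ?_
    have hkN : N + 1 ≤ k := by
      simp only [Finset.mem_range, Nat.lt_succ_iff, not_le] at hk hk'
      omega
    have hG : Real.Gamma ((n:ℝ)-j-k+1) = 0 := by
      have hc : (((k - (N+1) : ℕ)) : ℝ) = (k:ℝ) - N - 1 := by
        rw [Nat.cast_sub hkN]; push_cast; ring
      have : ((n:ℝ)-j-k+1) = -(((k - (N+1) : ℕ)) : ℝ) := by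
        rw [hc, ← hcN]; push_cast; ring
      rw [this, Real.Gamma_neg_nat_eq_zero]
    rw [hG, mul_zero, div_zero]
  rw [hshrink]
  have hconv : ∀ k ∈ range (N+1),
      (-1:ℝ)^k * (k.choose i) / (Nat.factorial k * Real.Gamma ((n:ℝ)-j-k+1))
        = (-1:ℝ)^k * (k.choose i) / (Nat.factorial k * Nat.factorial (N - k)) := by
    intro k hk
    have hkN : k ≤ N := Nat.lt_succ_iff.mp (Finset.mem_range.mp hk)
    have h1 : ((n:ℝ)-j-k+1) = ((N - k : ℕ) : ℝ) + 1 := by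
      rw [Nat.cast_sub hkN, hcN]
    rw [h1, Real.Gamma_nat_eq_factorial]
  rw [Finset.sum_congr rfl hconv, comb N i]
  by_cases h : i = N
  · subst h; simp
  · simp [h]

lemma fall_eq (a ν : ℝ) (n j : ℕ) (c : ℝ) :
    fall ((a + n) + ν - (a + j) - 1) (ν + c - 1)
      = Real.Gamma ((n:ℝ) - j + ν) / Real.Gamma ((n:ℝ) - j - c + 1) := by
  unfold fall
  congr 1 <;> ring_nf

lemma gamma_nonpos_int (n j k : ℕ) (h : n + 1 ≤ j + k) :
    Real.Gamma ((n:ℝ) - j - k + 1) = 0 := by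
  have hc : (((j + k - (n+1) : ℕ)) : ℝ) = (j:ℝ) + k - (n+1) := by
    rw [Nat.cast_sub h]; push_cast; ring
  have : ((n:ℝ) - j - k + 1) = -(((j + k - (n+1) : ℕ)) : ℝ) := by
    rw [hc]; ring
  rw [this, Real.Gamma_neg_nat_eq_zero]

lemma key (a ν : ℝ) (hν0 : 0 < ν) (hν1 : ν < 1) (f g : ℝ → ℝ) (n : ℕ) :
    ∑ k ∈ range (n + 1), binomR (-ν) (k : ℝ) * (bdiff^[k] g) (a + n) *
      ((1 / Real.Gamma (ν + k)) * ∑ j ∈ range (n - k + 1),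
        fall ((a + n) + ν - (a + j) - 1) (ν + k - 1) * f (a + j))
    = deltaSum a ν (f * g) n := by
  have hGν : Real.Gamma ν ≠ 0 := Real.Gamma_ne_zero fun m h => by
    have hm : (0:ℝ) ≤ m := Nat.cast_nonneg m
    linarith
  set T : ℕ → ℕ → ℕ → ℝ := fun k i j =>
    (1 / Real.Gamma ν) * ((-1:ℝ)^k * (k.choose i) / (Nat.factorial k * Real.Gamma ((n:ℝ)-j-k+1)))
      * ((-1:ℝ)^i * Real.Gamma ((n:ℝ)-j+ν) * g (a + n - i) * f (a + j)) with hT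
  have step1 : ∑ k ∈ range (n + 1), binomR (-ν) (k : ℝ) * (bdiff^[k] g) (a + n) *
      ((1 / Real.Gamma (ν + k)) * ∑ j ∈ range (n - k + 1),
        fall ((a + n) + ν - (a + j) - 1) (ν + k - 1) * f (a + j))
      = ∑ k ∈ range (n+1), ∑ i ∈ range (n+1), ∑ j ∈ range (n+1), T k i j := by
    refine Finset.sum_congr rfl fun k hk => ?_
    have hkn : k ≤ n := Nat.lt_succ_iff.mp (Finset.mem_range.mp hk)
    have hbd : (bdiff^[k] g) (a + n)
        = ∑ i ∈ range (n+1), (-1:ℝ)^i * (k.choose i) * g (a + n - i) := by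
      rw [bdiff_iter]
      refine Finset.sum_subset (Finset.range_subset_range.mpr (by omega)) fun i _ hi => ?_
      have : k < i := by
        simp only [Finset.mem_range, Nat.lt_succ_iff, not_le] at hi
        omega
      simp [Nat.choose_eq_zero_of_lt this]
    have hjext : ∑ j ∈ range (n - k + 1), fall ((a + n) + ν - (a + j) - 1) (ν + k - 1) * f (a + j)
        = ∑ j ∈ range (n+1), Real.Gamma ((n:ℝ) - j + ν) / Real.Gamma ((n:ℝ) - j - k + 1) * f (a + j) := by
      rw [Finset.sum_congr rfl fun j _ => by rw [fall_eq a ν n j (k:ℝ)]]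
      refine Finset.sum_subset (Finset.range_subset_range.mpr (by omega)) fun j hj hj' => ?_
      have hjk : n + 1 ≤ j + k := by
        simp only [Finset.mem_range, Nat.lt_succ_iff, not_le] at hj hj'
        omega
      rw [gamma_nonpos_int n j k hjk, div_zero, zero_mul]
    rw [hbd, hjext]
    have hB := binomR_div ν hν0 hν1 k
    calc binomR (-ν) (k:ℝ) * (∑ i ∈ range (n+1), (-1:ℝ)^i * (k.choose i) * g (a + n - i)) *
          ((1 / Real.Gamma (ν + k)) * ∑ j ∈ range (n+1),
            Real.Gamma ((n:ℝ) - j + ν) / Real.Gamma ((n:ℝ) - j - k + 1) * f (a + j))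
        = (binomR (-ν) (k:ℝ) * (1 / Real.Gamma (ν + k))) *
            ((∑ i ∈ range (n+1), (-1:ℝ)^i * (k.choose i) * g (a + n - i)) *
             (∑ j ∈ range (n+1), Real.Gamma ((n:ℝ) - j + ν) / Real.Gamma ((n:ℝ) - j - k + 1) * f (a + j))) := by
          ring
      _ = ((-1:ℝ)^k / ((Nat.factorial k : ℝ) * Real.Gamma ν)) *
            ∑ i ∈ range (n+1), ∑ j ∈ range (n+1),
              ((-1:ℝ)^i * (k.choose i) * g (a + n - i)) *
                (Real.Gamma ((n:ℝ) - j + ν) / Real.Gamma ((n:ℝ) - j - k + 1) * f (a + j)) := by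
          rw [hB, Finset.sum_mul_sum]
      _ = ∑ i ∈ range (n+1), ∑ j ∈ range (n+1), T k i j := by
          rw [Finset.mul_sum]
          refine Finset.sum_congr rfl fun i _ => ?_
          rw [Finset.mul_sum]
          refine Finset.sum_congr rfl fun j _ => ?_
          rw [hT]
          ring
  rw [step1]
  have step2 : ∑ k ∈ range (n+1), ∑ i ∈ range (n+1), ∑ j ∈ range (n+1), T k i j
      = ∑ j ∈ range (n+1), ∑ i ∈ range (n+1), ∑ k ∈ range (n+1), T k i j := by
    rw [Finset.sum_comm]
    have h1 : ∀ i ∈ range (n+1), ∑ k ∈ range (n+1), ∑ j ∈ range (n+1), T k i j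
        = ∑ j ∈ range (n+1), ∑ k ∈ range (n+1), T k i j := fun i _ => Finset.sum_comm
    rw [Finset.sum_congr rfl h1, Finset.sum_comm]
  rw [step2, deltaSum, Finset.mul_sum]
  refine Finset.sum_congr rfl fun j hj => ?_
  have hjn : j ≤ n := Nat.lt_succ_iff.mp (Finset.mem_range.mp hj)
  have hcastj : ((n - j : ℕ) : ℝ) = (n:ℝ) - j := by
    rw [Nat.cast_sub hjn]
  have hstep3 : ∀ i ∈ range (n+1), ∑ k ∈ range (n+1), T k i j
      = if i = n - j then ((1 / Real.Gamma ν) * Real.Gamma ((n:ℝ)-j+ν)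
          * g (a + n - i) * f (a + j)) / Nat.factorial (n-j) else 0 := by
    intro i _
    have hc : ∑ k ∈ range (n+1), T k i j
        = ((1 / Real.Gamma ν) * ((-1:ℝ)^i * Real.Gamma ((n:ℝ)-j+ν) * g (a + n - i) * f (a + j)))
          * ∑ k ∈ range (n+1), (-1:ℝ)^k * (k.choose i) / (Nat.factorial k * Real.Gamma ((n:ℝ)-j-k+1)) := by
      rw [Finset.mul_sum]
      refine Finset.sum_congr rfl fun k _ => ?_
      rw [hT]
      ring
    rw [hc, Asum n j i hjn]
    split
    · have h2 : ((-1:ℝ)^i)*((-1:ℝ)^i) = 1 := by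
        rw [← pow_add, ← two_mul, pow_mul]
        norm_num
      linear_combination (Real.Gamma ((n:ℝ)-j+ν) * g (a+(n:ℝ)-(i:ℝ)) * f (a+(j:ℝ))
        / (Real.Gamma ν * (Nat.factorial (n-j) : ℝ))) * h2
    · rw [mul_zero]
  rw [Finset.sum_congr rfl hstep3, Finset.sum_ite_eq' (range (n+1)) (n - j)]
  have hmem : n - j ∈ range (n+1) := Finset.mem_range.mpr (by omega)
  rw [if_pos hmem]
  have hg : a + (n:ℝ) - ((n - j : ℕ) : ℝ) = a + j := by
    rw [hcastj]; ring
  rw [hg]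
  have hfall : fall ((a + n) + ν - (a + j) - 1) (ν - 1)
      = Real.Gamma ((n:ℝ) - j + ν) / Real.Gamma ((n:ℝ) - j + 1) := by
    have := fall_eq a ν n j 0
    simpa using this
  have hGam : Real.Gamma ((n:ℝ) - j + 1) = Nat.factorial (n - j) := by
    rw [← hcastj, Real.Gamma_nat_eq_factorial]
  rw [hfall, hGam]
  simp only [Pi.mul_apply]
  ring

lemma nabla_eq_delta (a ν : ℝ) (f : ℝ → ℝ) (n : ℕ) :
    nablaSum a ν f n = deltaSum a ν f n := by
  unfold nablaSum deltaSum
  congr 1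
  refine Finset.sum_congr rfl fun j _ => ?_
  congr 1
  unfold rise fall
  congr 1 <;> ring_nf


/-- Leibniz formula for the diamond-γ fractional sum. -/
theorem diamond_leibniz (a α β γ : ℝ) (hα₀ : 0 < α) (hα₁ : α < 1)
    (hβ₀ : 0 < β) (hβ₁ : β < 1) (hγ : γ ∈ Set.Icc (0 : ℝ) 1)
    (f g : ℝ → ℝ) (n : ℕ) :
    diamond γ a α β (f * g) n
      = γ * ∑ k ∈ Finset.range (n + 1),
            binomR (-α) (k : ℝ) * (bdiff^[k] g) (a + n) *
              ((1 / Real.Gamma (α + k)) * ∑ j ∈ Finset.range (n - k + 1),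
                fall ((a + n) + α - (a + j) - 1) (α + k - 1) * f (a + j))
        + (1 - γ) * ∑ k ∈ Finset.range (n + 1),
            binomR (-β) (k : ℝ) * (bdiff^[k] g) (a + n) *
              ((1 / Real.Gamma (β + k)) * ∑ j ∈ Finset.range (n - k + 1),
                fall ((a + n) + β - (a + j) - 1) (β + k - 1) * f (a + j)) := by
  rw [diamond, nabla_eq_delta, ← key a α hα₀ hα₁ f g n, ← key a β hβ₀ hβ₁ f g n]
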